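/- In the (2,2,2) scenario, for all nonnegative reals c0, c1, cTB with c0 + c1 + cTB = 1, the mixture c0 • P0 + c1 • P1 + cTB • PTB belongs to the local polytope L∞ if and only if cTB ≤ (1 - c1)/√2. -/
import Mathlib


open Matrix Kronecker ComplexOrder

/-- A (2,m,v) box: a family of conditional probability distributions. -/
def IsBox (m v : ℕ) (p : Fin m → Fin m → Fin v → Fin v → ℝ) : Prop :=
  (∀ x y a b, 0 ≤ p x y a b) ∧ ∀ x y, ∑ a, ∑ b, p x y a b = 1

/-- A product box: `p x y a b = f x a * g y b` for local response functions `f`, `g`. -/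
def IsProductBox (m v : ℕ) (p : Fin m → Fin m → Fin v → Fin v → ℝ) : Prop :=
  ∃ f g : Fin m → Fin v → ℝ,
    (∀ x a, 0 ≤ f x a) ∧ (∀ y b, 0 ≤ g y b) ∧
    (∀ x, ∑ a, f x a = 1) ∧ (∀ y, ∑ b, g y b = 1) ∧
    ∀ x y a b, p x y a b = f x a * g y b

/-- Membership in `Q_d`: the box is realizable by a shared quantum state of local
dimension `d` together with local POVMs. -/
def IsQuantumBox (d m v : ℕ) (p : Fin m → Fin m → Fin v → Fin v → ℝ) : Prop :=
  ∃ (ρ : Matrix ((Fin d) × (Fin d)) ((Fin d) × (Fin d)) ℂ)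
    (A B : Fin m → Fin v → Matrix (Fin d) (Fin d) ℂ),
    ρ.PosSemidef ∧ ρ.trace = 1 ∧
    (∀ x a, (A x a).PosSemidef) ∧ (∀ x, ∑ a, A x a = 1) ∧
    (∀ y b, (B y b).PosSemidef) ∧ (∀ y, ∑ b, B y b = 1) ∧
    ∀ x y a b, (ρ * (A x a ⊗ₖ B y b)).trace = (p x y a b : ℂ)

/-- Membership in `L_N`: the box is realizable using shared classical randomness
of dimension `N`. -/
def IsLocalBox (N m v : ℕ) (p : Fin m → Fin m → Fin v → Fin v → ℝ) : Prop :=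
  ∃ (w : Fin N → ℝ) (f g : Fin N → Fin m → Fin v → ℝ),
    (∀ l, 0 ≤ w l) ∧ (∑ l, w l = 1) ∧
    (∀ l x a, 0 ≤ f l x a) ∧ (∀ l y b, 0 ≤ g l y b) ∧
    (∀ l x, ∑ a, f l x a = 1) ∧ (∀ l y, ∑ b, g l y b = 1) ∧
    ∀ x y a b, p x y a b = ∑ l, w l * f l x a * g l y b

/-- The maximally mixed box `P0`. -/
noncomputable def P0 : Fin 2 → Fin 2 → Fin 2 → Fin 2 → ℝ :=
  fun _x _y _a _b => 1 / 4

/-- The deterministic box `P1`: both parties always output `1`. -/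
def P1 : Fin 2 → Fin 2 → Fin 2 → Fin 2 → ℝ :=
  fun _x _y a b => if a = 1 ∧ b = 1 then 1 else 0

/-- The Tsirelson-bound-achieving box `PTB`. -/
noncomputable def PTB : Fin 2 → Fin 2 → Fin 2 → Fin 2 → ℝ :=
  fun x y a b =>
    (2 + (-1 : ℝ) ^ ((a : ℕ) + (b : ℕ) + (x : ℕ) * (y : ℕ)) * Real.sqrt 2) / 8

/- ----------------- Auxiliary material ----------------- -/

/-- The CHSH functional as a linear map. -/
noncomputable def chshF : (Fin 2 → Fin 2 → Fin 2 → Fin 2 → ℝ) →ₗ[ℝ] ℝ where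
  toFun p := ∑ x : Fin 2, ∑ y : Fin 2, ∑ a : Fin 2, ∑ b : Fin 2,
    (-1:ℝ)^((a:ℕ)+(b:ℕ)+(x:ℕ)*(y:ℕ)) * p x y a b
  map_add' p q := by
    simp [mul_add, Finset.sum_add_distrib]
  map_smul' c p := by
    simp [Fin.sum_univ_two]; ring

lemma chsh_prod_le (q : Fin 2 → Fin 2 → Fin 2 → Fin 2 → ℝ)
    (hq : IsProductBox 2 2 q) : chshF q ≤ 2 := by
  obtain ⟨f, g, hf, hg, hf1, hg1, hfg⟩ := hq
  have ef0 := hf1 0; have ef1 := hf1 1; have eg0 := hg1 0; have eg1 := hg1 1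
  simp [Fin.sum_univ_two] at ef0 ef1 eg0 eg1
  simp only [chshF, LinearMap.coe_mk, AddHom.coe_mk, Fin.sum_univ_two, hfg]
  norm_num
  have key : ∀ A0 A1 B0 B1 : ℝ, -1 ≤ A0 → A0 ≤ 1 → -1 ≤ A1 → A1 ≤ 1 →
      -1 ≤ B0 → B0 ≤ 1 → -1 ≤ B1 → B1 ≤ 1 →
      A0*B0 + A0*B1 + A1*B0 - A1*B1 ≤ 2 := by
    intro A0 A1 B0 B1 h1 h2 h3 h4 h5 h6 h7 h8
    rcases le_total 0 (B0 + B1) with h | h <;>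
      rcases le_total 0 (B0 - B1) with h' | h' <;> nlinarith
  have := key (f 0 0 - f 0 1) (f 1 0 - f 1 1) (g 0 0 - g 0 1) (g 1 0 - g 1 1)
    (by have := hf 0 0; have := hf 0 1; linarith)
    (by have := hf 0 0; have := hf 0 1; linarith)
    (by have := hf 1 0; have := hf 1 1; linarith)
    (by have := hf 1 0; have := hf 1 1; linarith)
    (by have := hg 0 0; have := hg 0 1; linarith)
    (by have := hg 0 0; have := hg 0 1; linarith)
    (by have := hg 1 0; have := hg 1 1; linarith)
    (by have := hg 1 0; have := hg 1 1; linarith)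
  nlinarith [this]

lemma P0_prod : IsProductBox 2 2 P0 := by
  refine ⟨fun _ _ => 1/2, fun _ _ => 1/2, by norm_num, by norm_num,
    fun x => by simp [Fin.sum_univ_two], fun y => by simp [Fin.sum_univ_two],
    fun x y a b => by norm_num [P0]⟩

lemma P1_prod : IsProductBox 2 2 P1 := by
  refine ⟨fun _ a => if a = 1 then 1 else 0, fun _ b => if b = 1 then 1 else 0,
    fun x a => by positivity, fun y b => by positivity,
    fun x => by simp [Fin.sum_univ_two], fun y => by simp [Fin.sum_univ_two],
    fun x y a b => ?_⟩
  by_cases ha : a = 1 <;> by_cases hb : b = 1 <;> simp [P1, ha, hb]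

/-- A deterministic product box. -/
def detBox (F G : Fin 2 → Fin 2) : Fin 2 → Fin 2 → Fin 2 → Fin 2 → ℝ :=
  fun x y a b => (if a = F x then 1 else 0) * (if b = G y then 1 else 0)

lemma detBox_prod (F G : Fin 2 → Fin 2) : IsProductBox 2 2 (detBox F G) := by
  refine ⟨fun x a => if a = F x then 1 else 0, fun y b => if b = G y then 1 else 0,
    fun x a => by positivity, fun y b => by positivity,
    fun x => ?_, fun y => ?_, fun x y a b => rfl⟩
  · simp [Finset.sum_ite_eq' Finset.univ (F x)]
  · simp [Finset.sum_ite_eq' Finset.univ (G y)]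

/-- The isotropic local box at the classical boundary. -/
noncomputable def PL : Fin 2 → Fin 2 → Fin 2 → Fin 2 → ℝ :=
  fun x y a b => (2 + (-1:ℝ)^((a:ℕ)+(b:ℕ)+(x:ℕ)*(y:ℕ)))/8

/-- The eight deterministic strategies saturating the CHSH inequality. -/
def DL : Fin 8 → (Fin 2 → Fin 2 → Fin 2 → Fin 2 → ℝ)
  | 0 => detBox ![0,0] ![0,0]
  | 1 => detBox ![1,1] ![1,1]
  | 2 => detBox ![0,1] ![0,0]
  | 3 => detBox ![1,0] ![1,1]
  | 4 => detBox ![0,0] ![0,1]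
  | 5 => detBox ![1,1] ![1,0]
  | 6 => detBox ![0,1] ![1,0]
  | 7 => detBox ![1,0] ![0,1]

lemma DL_prod (i : Fin 8) : IsProductBox 2 2 (DL i) := by
  fin_cases i <;> exact detBox_prod _ _

lemma PL_mem : PL ∈ convexHull ℝ
    {p : Fin 2 → Fin 2 → Fin 2 → Fin 2 → ℝ | IsProductBox 2 2 p} := by
  have hPL : PL = ∑ i : Fin 8, (1/8 : ℝ) • DL i := by
    funext x y a b
    simp only [Finset.sum_apply, Pi.smul_apply, smul_eq_mul, Fin.sum_univ_eight]
    fin_cases x <;> fin_cases y <;> fin_cases a <;> fin_cases b <;>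
      norm_num [PL, DL, detBox]
  rw [hPL]
  exact Convex.sum_mem (convex_convexHull ℝ _) (fun i _ => by norm_num)
    (by simp) (fun i _ => subset_convexHull ℝ _ (DL_prod i))

theorem triangle_01TB_local_boundary (c0 c1 cTB : ℝ)
    (h0 : 0 ≤ c0) (h1 : 0 ≤ c1) (hTB : 0 ≤ cTB) (hsum : c0 + c1 + cTB = 1) :
    (c0 • P0 + c1 • P1 + cTB • PTB) ∈
        convexHull ℝ
          {p : Fin 2 → Fin 2 → Fin 2 → Fin 2 → ℝ | IsProductBox 2 2 p} ↔
      cTB ≤ (1 - c1) / Real.sqrt 2 := by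
  have hs2 : (0:ℝ) < Real.sqrt 2 := Real.sqrt_pos.mpr (by norm_num)
  have hs2sq : Real.sqrt 2 * Real.sqrt 2 = 2 := Real.mul_self_sqrt (by norm_num)
  constructor
  · intro h
    have hconv : Convex ℝ {p : Fin 2 → Fin 2 → Fin 2 → Fin 2 → ℝ | chshF p ≤ 2} :=
      convex_halfSpace_le chshF.isLinear 2
    have hle : chshF (c0 • P0 + c1 • P1 + cTB • PTB) ≤ 2 :=
      convexHull_min (fun q hq => chsh_prod_le q hq) hconv h
    have e0 : chshF P0 = 0 := by
      simp [chshF, P0, Fin.sum_univ_two]; norm_num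
    have e1 : chshF P1 = 2 := by
      simp [chshF, P1, Fin.sum_univ_two]; norm_num
    have eTB : chshF PTB = 2 * Real.sqrt 2 := by
      simp [chshF, PTB, Fin.sum_univ_two]; norm_num; ring
    rw [map_add, map_add, _root_.map_smul, _root_.map_smul, _root_.map_smul, e0, e1, eTB,
      smul_eq_mul, smul_eq_mul, smul_eq_mul] at hle
    rw [le_div_iff₀ hs2]
    nlinarith
  · intro h
    rw [le_div_iff₀ hs2] at h
    set w0 : ℝ := c0 + cTB - cTB * Real.sqrt 2 with hw0
    have hw0nn : 0 ≤ w0 := by nlinarith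
    have hkey : c0 • P0 + c1 • P1 + cTB • PTB =
        ∑ i : Fin 3, (![w0, c1, cTB * Real.sqrt 2] i) • (![P0, P1, PL] i) := by
      funext x y a b
      simp only [Finset.sum_apply, Pi.smul_apply, Pi.add_apply, smul_eq_mul,
        Fin.sum_univ_three, Matrix.cons_val_zero, Matrix.cons_val_one,
        Matrix.head_cons, Matrix.cons_val_two, Matrix.tail_cons]
      fin_cases x <;> fin_cases y <;> fin_cases a <;> fin_cases b <;>
        (norm_num [P0, P1, PTB, PL, hw0]; ring)
    rw [hkey]
    refine Convex.sum_mem (convex_convexHull ℝ _) (fun i _ => ?_) ?_ (fun i _ => ?_)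
    · fin_cases i <;> simp [hw0nn, h1, mul_nonneg hTB hs2.le]
    · simp [Fin.sum_univ_three, hw0]; linarith
    · fin_cases i
      · exact subset_convexHull ℝ _ P0_prod
      · exact subset_convexHull ℝ _ P1_prod
      · exact PL_mem
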